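/- Let M and N be abelian groups with Ext¹_ℤ(M, N) = 0. Then every symmetric ℤ-bilinear map b : M × M → N is the polar form of a quadratic map: there exists a function q : M → N with q(m + m') − q(m) − q(m') = b(m, m') for all m, m' ∈ M. -/

import Mathlib

open CategoryTheory

/-- The abelian extension of `M` by `N` determined by the symmetric 2-cocycle `b`. -/
def SCAux.E (M N : Type) [AddCommGroup M] [AddCommGroup N] (b : M →+ M →+ N)
    (_hsymm : ∀ m m' : M, b m m' = b m' m) : Type := N × M

namespace SCAux

variable {M N : Type} [AddCommGroup M] [AddCommGroup N] {b : M →+ M →+ N}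
  {hsymm : ∀ m m' : M, b m m' = b m' m}

instance : Add (E M N b hsymm) := ⟨fun x y => (x.1 + y.1 + b x.2 y.2, x.2 + y.2)⟩
instance : Zero (E M N b hsymm) := ⟨((0 : N), (0 : M))⟩
instance : Neg (E M N b hsymm) := ⟨fun x => (-x.1 + b x.2 x.2, -x.2)⟩

lemma add_def (x y : E M N b hsymm) :
    x + y = (x.1 + y.1 + b x.2 y.2, x.2 + y.2) := rfl

lemma zero_def : (0 : E M N b hsymm) = ((0 : N), (0 : M)) := rfl

lemma neg_def (x : E M N b hsymm) : -x = (-x.1 + b x.2 x.2, -x.2) := rfl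

omit [AddCommGroup M] [AddCommGroup N] in
private lemma prodext {x y : N × M} (h1 : x.1 = y.1) (h2 : x.2 = y.2) : x = y :=
  Prod.ext h1 h2

instance instACG : AddCommGroup (E M N b hsymm) where
  add_assoc x y z := by
    refine prodext ?_ ?_ <;> rw [add_def, add_def, add_def, add_def] <;>
      simp only [map_add, AddMonoidHom.add_apply] <;> abel
  zero_add x := by
    refine prodext ?_ ?_ <;> rw [add_def, zero_def] <;>
      simp only [map_zero, AddMonoidHom.zero_apply, zero_add, add_zero]
  add_zero x := by
    refine prodext ?_ ?_ <;> rw [add_def, zero_def] <;>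
      simp only [map_zero, add_zero]
  neg_add_cancel x := by
    refine prodext ?_ ?_ <;> rw [add_def, neg_def, zero_def] <;>
      simp only [map_neg, AddMonoidHom.neg_apply] <;> abel
  add_comm x y := by
    refine prodext ?_ ?_ <;> rw [add_def, add_def] <;>
      simp only [hsymm x.2 y.2] <;> abel
  nsmul := nsmulRec
  zsmul := zsmulRec

end SCAux

/-- Build a morphism in `ModuleCat ℤ` from a mere additive homomorphism of the
underlying groups. -/
def SCAux.toModuleCatHom {A B : ModuleCat ℤ} (f : ↑A →+ ↑B) : A ⟶ B := ModuleCat.ofHom <|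
  @LinearMap.mk ℤ ℤ _ _ (RingHom.id ℤ) A B _ _ A.isModule B.isModule
    ⟨f, fun _ _ => f.map_add _ _⟩
    (fun n y => by
      have h := @map_intCast_smul ↑A ↑B _ _ _ _ _ f ℤ ℤ _ _ A.isModule B.isModule n y
      simpa using h)

@[simp] lemma SCAux.toModuleCatHom_apply {A B : ModuleCat ℤ} (f : ↑A →+ ↑B) (x : A) :
    SCAux.toModuleCatHom f x = f x := rfl

/-- (Key step for Corollary 2.7(d) / diagram (14).)  If `M`, `N` are abelian
groups with `Ext¹_ℤ(M, N) = 0`, then every symmetric ℤ-bilinear map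
`b : M × M → N` is the polar form of a quadratic map: there is `q : M → N` with
`q(m + m') − q(m) − q(m') = b(m, m')` for all `m`, `m'`. -/
theorem self_cup_stmt_9 (M N : Type) [AddCommGroup M] [AddCommGroup N]
    (hExt : Subsingleton
      (((Ext ℤ (ModuleCat ℤ) 1).obj (Opposite.op (ModuleCat.of ℤ M))).obj
        (ModuleCat.of ℤ N)))
    (b : M →+ M →+ N) (hsymm : ∀ m m' : M, b m m' = b m' m) :
    ∃ q : M → N, ∀ m m' : M, q (m + m') - q m - q m' = b m m' := by
  classical
  let Mc : ModuleCat ℤ := ModuleCat.of ℤ M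
  let Nc : ModuleCat ℤ := ModuleCat.of ℤ N
  let Ec : ModuleCat ℤ := ModuleCat.of ℤ (SCAux.E M N b hsymm)
  let P : ProjectiveResolution Mc := ProjectiveResolution.of Mc
  -- the projection of the extension, as a morphism in `ModuleCat ℤ`
  let π2 : Ec ⟶ Mc := SCAux.toModuleCatHom
    { toFun := fun x => x.2, map_zero' := rfl, map_add' := fun _ _ => rfl }
  haveI : Epi π2 := (ModuleCat.epi_iff_surjective _).2 (fun m => ⟨((0 : N), m), rfl⟩)
  let π0 : P.complex.X 0 ⟶ Mc := P.π.f 0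
  -- lift `π0` through `π2` using projectivity
  let φ : P.complex.X 0 ⟶ Ec := Projective.factorThru π0 π2
  have hφ : ∀ x : P.complex.X 0, (φ x).2 = π0 x := by
    intro x
    have := Projective.factorThru_comp π0 π2
    exact ConcreteCategory.congr_hom this x
  have hd10π : ∀ y : P.complex.X 1, π0 (P.complex.d 1 0 y) = 0 := by
    intro y
    have h : P.complex.d 1 0 ≫ P.π.f 0 = 0 := P.complex_d_comp_π_f_zero
    have h2 := ConcreteCategory.congr_hom h y
    exact h2.trans rfl
  have hφd2 : ∀ y : P.complex.X 1, (φ (P.complex.d 1 0 y)).2 = 0 := fun y => by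
    rw [hφ, hd10π]
  -- the restriction of `φ` to 1-chains, valued in `N`
  let ψadd : P.complex.X 1 →+ N :=
  { toFun := fun y => (φ (P.complex.d 1 0 y)).1
    map_zero' := by
      show (φ (P.complex.d 1 0 0)).1 = 0
      rw [map_zero, map_zero]; rfl
    map_add' := fun y z => by
      show (φ (P.complex.d 1 0 (y + z))).1
        = (φ (P.complex.d 1 0 y)).1 + (φ (P.complex.d 1 0 z)).1
      rw [map_add, map_add, SCAux.add_def, hφd2]
      simp only [map_zero, AddMonoidHom.zero_apply, add_zero] }
  let ψ : P.complex.X 1 ⟶ Nc := SCAux.toModuleCatHom ψadd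
  -- Ext vanishing gives exactness of the Hom complex in degree 1
  let Cy := P.complex.linearYonedaObj ℤ Nc
  haveI hsub : Subsingleton (Cy.homology 1) := by
    have e := P.isoExt (R := ℤ) 1 Nc
    exact Equiv.subsingleton ((forget (ModuleCat ℤ)).mapIso e).toEquiv.symm
  have hex : (Cy.sc' 0 1 2).Exact := by
    rw [← HomologicalComplex.exactAt_iff' Cy 0 1 2 (by simp) (by simp),
      HomologicalComplex.exactAt_iff_isZero_homology]
    exact ModuleCat.isZero_of_subsingleton _
  rw [ShortComplex.moduleCat_exact_iff] at hex
  obtain ⟨Ψ', hΨ'⟩ := hex ψ (by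
    show (Cy.d 1 2) ψ = 0
    have hd : (Cy.d 1 2) ψ = P.complex.d 2 1 ≫ ψ := by
      rw [ChainComplex.linearYonedaObj_d]; rfl
    rw [hd]
    have : (P.complex.d 2 1 ≫ ψ : P.complex.X 2 ⟶ Nc) = 0 := by
      ext y
      show (φ (P.complex.d 1 0 (P.complex.d 2 1 y))).1 = 0
      have hz : P.complex.d 1 0 (P.complex.d 2 1 y) = 0 := by
        have h := P.complex.d_comp_d 2 1 0
        have h2 := ConcreteCategory.congr_hom h y
        exact h2.trans rfl
      rw [hz, map_zero]
      rfl
    exact this)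
  let Ψ : P.complex.X 0 ⟶ Nc := Ψ'
  have hΨc : P.complex.d 1 0 ≫ Ψ = ψ := by
    have hd : (Cy.d 0 1) Ψ' = P.complex.d 1 0 ≫ Ψ := by
      rw [ChainComplex.linearYonedaObj_d]; rfl
    rw [← hd]; exact hΨ'
  let toN : ↑Nc → N := fun x => x
  have htoNadd : ∀ x y : ↑Nc, toN (x + y) = toN x + toN y := fun _ _ => rfl
  have hΨ : ∀ y : P.complex.X 1, toN (Ψ (P.complex.d 1 0 y)) = ψadd y :=
    fun y => ConcreteCategory.congr_hom hΨc y
  -- surjectivity of `π0`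
  have hsurj : Function.Surjective π0 := (ModuleCat.epi_iff_surjective (P.π.f 0)).1 inferInstance
  choose sec hsec using hsurj
  -- exactness of the resolution in degree 0
  have hex0 := P.exact₀
  rw [ShortComplex.moduleCat_exact_iff] at hex0
  refine ⟨fun m => (φ (sec m)).1 - toN (Ψ (sec m)), ?_⟩
  intro m m'
  obtain ⟨y, hy⟩ := hex0 (sec (m + m') - (sec m + sec m'))
    (by show π0 (sec (m + m') - (sec m + sec m')) = 0
        rw [map_sub, map_add, hsec, hsec, hsec, sub_self])
  have hy' : P.complex.d 1 0 y = sec (m + m') - (sec m + sec m') := hy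
  have hx : sec (m + m') = sec m + sec m' + P.complex.d 1 0 y := by
    rw [hy']; abel
  have hfst : (φ (sec (m + m'))).1
      = (φ (sec m)).1 + (φ (sec m')).1 + b m m' + ψadd y := by
    have h1 : φ (sec (m + m')) = φ (sec m) + φ (sec m') + φ (P.complex.d 1 0 y) := by
      rw [hx, map_add, map_add]
    rw [h1, SCAux.add_def, SCAux.add_def]
    simp only [hφd2, map_zero, add_zero, hφ, hsec]
    rfl
  have hΨx : toN (Ψ (sec (m + m'))) = toN (Ψ (sec m)) + toN (Ψ (sec m')) + ψadd y := by
    rw [hx, map_add, map_add, htoNadd, htoNadd, hΨ y]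
  show (φ (sec (m + m'))).1 - toN (Ψ (sec (m + m')))
    - ((φ (sec m)).1 - toN (Ψ (sec m))) - ((φ (sec m')).1 - toN (Ψ (sec m'))) = b m m'
  rw [hfst, hΨx]
  abel
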